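/- arXiv:1901.09791 — 4 statements merged into one kernel-verified Lean document; each statement's English description precedes it below -/
import Mathlib

section
/- Let A be a finite set and let H ⊆ A × A be the edge set of a directed graph on A. A subset C ⊆ A × A is a maximal child of H if and only if: C ⊆ H, C contains every bridge edge of H, and for every strongly connected component S of H, the set C ∩ (S × S) is a maximal child of H ∩ (S × S). (Equivalently: the maximal children of H are exactly the sets consisting of all bridge edges of H together with, for each strongly connected component S of H, a maximal child of the edge set H ∩ (S × S).) -/
/-- The edge relation of an edge set `E ⊆ A × A`. -/
def EdgeRel {A : Type*} (E : Set (A × A)) : A → A → Prop := fun u v => (u, v) ∈ E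

/-- An edge set is acyclic if no vertex has a path of length ≥ 1 back to itself. -/
def AcyclicEdges {A : Type*} (E : Set (A × A)) : Prop :=
  ∀ a : A, ¬ Relation.TransGen (EdgeRel E) a a

/-- Two vertices are strongly connected in `E` if they are equal or there are paths
of length ≥ 1 both ways. -/
def StronglyConn {A : Type*} (E : Set (A × A)) (u v : A) : Prop :=
  u = v ∨ (Relation.TransGen (EdgeRel E) u v ∧ Relation.TransGen (EdgeRel E) v u)

/-- `S` is a strongly connected component of `E`: an equivalence class of the
strongly-connected relation. -/
def IsSCC {A : Type*} (E : Set (A × A)) (S : Set A) : Prop :=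
  ∃ a : A, S = {b : A | StronglyConn E a b}

/-- The bridge edges of `E`: edges whose endpoints are not strongly connected in `E`. -/
def BridgeEdges {A : Type*} (E : Set (A × A)) : Set (A × A) :=
  {e | e ∈ E ∧ ¬ StronglyConn E e.1 e.2}

/-- `C` is a maximal child of the directed graph with edge set `H`. -/
def MaximalChild {A : Type*} (H C : Set (A × A)) : Prop :=
  C ⊆ H ∧ AcyclicEdges C ∧ ∀ e ∈ H \ C, ¬ AcyclicEdges (C ∪ {e})

open Relation

section Aux
variable {A : Type*} {C H E F : Set (A × A)}

lemma transGen_mono' (h : E ⊆ F) {u v : A} (ht : TransGen (EdgeRel E) u v) :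
    TransGen (EdgeRel F) u v := TransGen.mono (fun _ _ hx => h hx) _ _ ht

lemma reflTransGen_mono' (h : E ⊆ F) {u v : A} (ht : ReflTransGen (EdgeRel E) u v) :
    ReflTransGen (EdgeRel F) u v := ReflTransGen.mono (fun _ _ hx => h hx) _ _ ht

lemma acyclic_mono (h : E ⊆ F) (hF : AcyclicEdges F) : AcyclicEdges E :=
  fun a ha => hF a (transGen_mono' h ha)

lemma sc_symm {u v : A} (h : StronglyConn E u v) : StronglyConn E v u := by
  rcases h with rfl | ⟨h1, h2⟩
  · exact Or.inl rfl
  · exact Or.inr ⟨h2, h1⟩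

lemma sc_trans {u v w : A} (h1 : StronglyConn E u v) (h2 : StronglyConn E v w) :
    StronglyConn E u w := by
  rcases h1 with rfl | ⟨a1, a2⟩
  · exact h2
  · rcases h2 with rfl | ⟨b1, b2⟩
    · exact Or.inr ⟨a1, a2⟩
    · exact Or.inr ⟨a1.trans b1, b2.trans a2⟩

lemma cycle_insert_aux1 {u v a b : A}
    (h : TransGen (EdgeRel (C ∪ {(u, v)})) a b) :
    TransGen (EdgeRel C) a b ∨
      (ReflTransGen (EdgeRel C) a u ∧ ReflTransGen (EdgeRel (C ∪ {(u, v)})) v b) := by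
  induction h using Relation.TransGen.head_induction_on with
  | single h =>
    rcases h with h | h
    · exact Or.inl (TransGen.single h)
    · rcases Prod.mk.injEq .. ▸ Set.mem_singleton_iff.mp h with ⟨rfl, rfl⟩
      exact Or.inr ⟨ReflTransGen.refl, ReflTransGen.refl⟩
  | head h' ht IH =>
    rcases h' with h' | h'
    · rcases IH with p | ⟨p, q⟩
      · exact Or.inl (p.head h')
      · exact Or.inr ⟨p.head h', q⟩
    · rcases Prod.mk.injEq .. ▸ Set.mem_singleton_iff.mp h' with ⟨rfl, rfl⟩
      exact Or.inr ⟨ReflTransGen.refl, ht.to_reflTransGen⟩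

lemma cycle_insert_aux2 {u v x : A}
    (h : ReflTransGen (EdgeRel (C ∪ {(u, v)})) x u) :
    ReflTransGen (EdgeRel C) x u ∨ ReflTransGen (EdgeRel C) v u := by
  induction h using Relation.ReflTransGen.head_induction_on with
  | refl => exact Or.inl ReflTransGen.refl
  | head h' ht IH =>
    rcases h' with h' | h'
    · rcases IH with p | p
      · exact Or.inl (p.head h')
      · exact Or.inr p
    · rcases Prod.mk.injEq .. ▸ Set.mem_singleton_iff.mp h' with ⟨rfl, rfl⟩
      exact Or.inl ReflTransGen.refl

lemma cycle_insert {u v a : A} (hC : AcyclicEdges C)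
    (h : TransGen (EdgeRel (C ∪ {(u, v)})) a a) :
    ReflTransGen (EdgeRel C) v u := by
  rcases cycle_insert_aux1 h with h1 | ⟨h1, h2⟩
  · exact absurd h1 (hC a)
  · have hvu : ReflTransGen (EdgeRel (C ∪ {(u, v)})) v u :=
      h2.trans (reflTransGen_mono' Set.subset_union_left h1)
    rcases cycle_insert_aux2 hvu with h | h <;> exact h

lemma restrict_path (hCH : C ⊆ H) {u x : A}
    (hux : TransGen (EdgeRel H) u x) (hxu : ReflTransGen (EdgeRel C) x u) :
    ReflTransGen
      (EdgeRel (C ∩ {w | StronglyConn H u w} ×ˢ {w | StronglyConn H u w})) x u := by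
  revert hux
  induction hxu using Relation.ReflTransGen.head_induction_on with
  | refl => exact fun _ => ReflTransGen.refl
  | @head x y h' ht IH =>
    intro hux
    have huy : TransGen (EdgeRel H) u y := hux.tail (hCH h')
    have hx : StronglyConn H u x :=
      Or.inr ⟨hux, TransGen.head' (hCH h') (reflTransGen_mono' hCH ht)⟩
    have hy : StronglyConn H u y := by
      rcases reflTransGen_iff_eq_or_transGen.mp (reflTransGen_mono' hCH ht) with h | h
      · exact Or.inl h
      · exact Or.inr ⟨huy, h⟩
    exact (IH huy).head ⟨h', hx, hy⟩
end Aux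

theorem maximalChild_iff_bridges_and_scc {A : Type*} [Fintype A]
    (H C : Set (A × A)) :
    MaximalChild H C ↔
      C ⊆ H ∧ BridgeEdges H ⊆ C ∧
        ∀ S : Set A, IsSCC H S → MaximalChild (H ∩ S ×ˢ S) (C ∩ S ×ˢ S) := by
  constructor
  · rintro ⟨hCH, hacy, hmax⟩
    refine ⟨hCH, ?_, ?_⟩
    · rintro ⟨u, v⟩ ⟨heH, hnsc⟩
      by_contra heC
      have hncy := hmax (u, v) ⟨heH, heC⟩
      simp only [AcyclicEdges, not_forall, not_not] at hncy
      obtain ⟨a, ha⟩ := hncy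
      have hvu := cycle_insert hacy ha
      rcases reflTransGen_iff_eq_or_transGen.mp hvu with h | h
      · exact hnsc (Or.inl h)
      · exact hnsc (Or.inr ⟨TransGen.single heH, transGen_mono' hCH h⟩)
    · rintro S ⟨a, rfl⟩
      set S : Set A := {b | StronglyConn H a b} with hS
      refine ⟨fun e ⟨h1, h2⟩ => ⟨hCH h1, h2⟩, acyclic_mono Set.inter_subset_left hacy, ?_⟩
      rintro ⟨u, v⟩ ⟨⟨heH, heS⟩, heC'⟩ hacy'
      obtain ⟨hu, hv⟩ : u ∈ S ∧ v ∈ S := heS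
      have heC : (u, v) ∉ C := fun h => heC' ⟨h, hu, hv⟩
      have hncy := hmax (u, v) ⟨heH, heC⟩
      simp only [AcyclicEdges, not_forall, not_not] at hncy
      obtain ⟨b, hb⟩ := hncy
      have hvu := cycle_insert hacy hb
      have hSu : S = {w | StronglyConn H u w} := by
        ext w
        exact ⟨fun hw => sc_trans (sc_symm hu) hw, fun hw => sc_trans hu hw⟩
      have hrest := restrict_path hCH (TransGen.single heH) hvu
      rw [← hSu] at hrest
      exact hacy' u (TransGen.head' (Or.inr rfl)
        (reflTransGen_mono' Set.subset_union_left hrest))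
  · rintro ⟨hCH, hbr, hscc⟩
    refine ⟨hCH, ?_, ?_⟩
    · intro a ha
      have hS := hscc {b | StronglyConn H a b} ⟨a, rfl⟩
      obtain ⟨b, hab, hba⟩ := (Relation.TransGen.head'_iff).mp ha
      have hrest := restrict_path hCH (TransGen.single (hCH hab)) hba
      have ha' : StronglyConn H a a := Or.inl rfl
      have hb' : StronglyConn H a b := by
        rcases reflTransGen_iff_eq_or_transGen.mp (reflTransGen_mono' hCH hba) with h | h
        · exact Or.inl h
        · exact Or.inr ⟨TransGen.single (hCH hab), h⟩
      exact hS.2.1 a (TransGen.head' ⟨hab, ha', hb'⟩ hrest)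
    · rintro ⟨u, v⟩ ⟨heH, heC⟩ hacyU
      have hsc : StronglyConn H u v := by
        by_contra h
        exact heC (hbr ⟨heH, h⟩)
      have hS := hscc {b | StronglyConn H u b} ⟨u, rfl⟩
      have hu : StronglyConn H u u := Or.inl rfl
      exact hS.2.2 (u, v) ⟨⟨heH, hu, hsc⟩, fun h => heC h.1⟩
        (acyclic_mono (Set.union_subset_union_left _ Set.inter_subset_left) hacyU)
end

section
/- Let A be a finite set, let H ⊆ A × A be the edge set of a directed graph on A, and let C ⊆ H be a maximal child of H. Then C contains every bridge edge of H, and for every strongly connected component S of H the set C ∩ (S × S) is a maximal child of the edge set H ∩ (S × S); moreover C equals the union of the bridge edges of H and the sets C ∩ (S × S) over all strongly connected components S of H. -/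
private lemma sc_trans_s2 {A : Type*} {E : Set (A × A)} {a b c : A}
    (hab : StronglyConn E a b) (hbc : StronglyConn E b c) : StronglyConn E a c := by
  rcases hab with rfl | ⟨h1, h2⟩
  · exact hbc
  · rcases hbc with rfl | ⟨h3, h4⟩
    · exact Or.inr ⟨h1, h2⟩
    · exact Or.inr ⟨h1.trans h3, h4.trans h2⟩

private lemma sc_symm_s2 {A : Type*} {E : Set (A × A)} {a b : A}
    (h : StronglyConn E a b) : StronglyConn E b a := by
  rcases h with rfl | ⟨h1, h2⟩
  exacts [Or.inl rfl, Or.inr ⟨h2, h1⟩]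

private lemma tg_union {A : Type*} {C : Set (A × A)} {u v x y : A}
    (h : Relation.TransGen (EdgeRel (C ∪ {(u, v)})) x y) :
    Relation.TransGen (EdgeRel C) x y ∨
      (Relation.ReflTransGen (EdgeRel C) x u ∧ Relation.ReflTransGen (EdgeRel C) v y) := by
  induction h with
  | single h =>
    rcases h with h | h
    · exact Or.inl (.single h)
    · rw [Set.mem_singleton_iff, Prod.mk.injEq] at h
      obtain ⟨rfl, rfl⟩ := h
      exact Or.inr ⟨.refl, .refl⟩
  | tail hxb hby ih =>
    rcases hby with hby | hby
    · rcases ih with ih | ⟨p, q⟩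
      · exact Or.inl (ih.tail hby)
      · exact Or.inr ⟨p, q.tail hby⟩
    · rw [Set.mem_singleton_iff, Prod.mk.injEq] at hby
      obtain ⟨rfl, rfl⟩ := hby
      rcases ih with ih | ⟨p, _⟩
      · exact Or.inr ⟨ih.to_reflTransGen, .refl⟩
      · exact Or.inr ⟨p, .refl⟩

private lemma back_path {A : Type*} {C : Set (A × A)} {u v : A}
    (hC : AcyclicEdges C) (hne : ¬ AcyclicEdges (C ∪ {(u, v)})) :
    Relation.ReflTransGen (EdgeRel C) v u := by
  simp only [AcyclicEdges, not_forall, not_not] at hne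
  obtain ⟨a, ha⟩ := hne
  rcases tg_union ha with h | ⟨p, q⟩
  · exact absurd h (hC a)
  · exact q.trans p

private lemma restrict_path_s2 {A : Type*} {H C : Set (A × A)} (hCH : C ⊆ H) {S : Set A} {a : A}
    (hS : S = {b : A | StronglyConn H a b}) {u v : A}
    (_hu : u ∈ S) (hv : v ∈ S) (he : (u, v) ∈ H) :
    ∀ x, Relation.ReflTransGen (EdgeRel C) x u → x ∈ S →
      Relation.ReflTransGen (EdgeRel (C ∩ S ×ˢ S)) x u := by
  intro x hx
  induction hx using Relation.ReflTransGen.head_induction_on with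
  | refl => intro _; exact .refl
  | @head x b hxb hbu ih =>
    intro hxS
    have hax : StronglyConn H a x := by rw [hS] at hxS; exact hxS
    have hav : StronglyConn H a v := by rw [hS] at hv; exact hv
    have hxb' : Relation.TransGen (EdgeRel H) x b := .single (hCH hxb)
    have hbu' : Relation.ReflTransGen (EdgeRel H) b u := Relation.ReflTransGen.mono (fun p q h => hCH h) _ _ hbu
    have hbv : Relation.TransGen (EdgeRel H) b v := Relation.TransGen.tail' hbu' he
    have hbx : Relation.TransGen (EdgeRel H) b x := by
      rcases sc_trans_s2 (sc_symm_s2 hav) hax with rfl | ⟨h1, _⟩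
      · exact hbv
      · exact hbv.trans h1
    have hbS : b ∈ S := by
      rw [hS]
      exact sc_trans_s2 hax (Or.inr ⟨hxb', hbx⟩)
    exact Relation.ReflTransGen.head ⟨hxb, hxS, hbS⟩ (ih hbS)

theorem maximalChild_contains_bridges_and_restricts {A : Type*} [Fintype A]
    (H C : Set (A × A)) (hC : MaximalChild H C) :
    BridgeEdges H ⊆ C ∧
      (∀ S : Set A, IsSCC H S → MaximalChild (H ∩ S ×ˢ S) (C ∩ S ×ˢ S)) ∧
      C = BridgeEdges H ∪ ⋃ S ∈ {S : Set A | IsSCC H S}, C ∩ S ×ˢ S := by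
  obtain ⟨hCH, hAc, hMax⟩ := hC
  have hbr : BridgeEdges H ⊆ C := by
    rintro ⟨u, v⟩ ⟨heH, hns⟩
    by_contra hnC
    have hvu := back_path hAc (hMax (u, v) ⟨heH, hnC⟩)
    apply hns
    rcases (Relation.reflTransGen_iff_eq_or_transGen.mp hvu) with rfl | h
    · exact Or.inl rfl
    · exact Or.inr ⟨.single heH, Relation.TransGen.mono (fun p q hh => hCH hh) _ _ h⟩
  refine ⟨hbr, ?_, ?_⟩
  · rintro S ⟨a, hS⟩
    refine ⟨Set.inter_subset_inter_left _ hCH, ?_, ?_⟩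
    · intro x hx
      exact hAc x (Relation.TransGen.mono (fun p q h => h.1) _ _ hx)
    · rintro ⟨u, v⟩ ⟨⟨heH, heS⟩, hne⟩ hacy
      have heC : (u, v) ∉ C := fun h => hne ⟨h, heS⟩
      have hvu := back_path hAc (hMax (u, v) ⟨heH, heC⟩)
      have hres := restrict_path_s2 hCH hS heS.1 heS.2 heH v hvu heS.2
      apply hacy u
      exact Relation.TransGen.head' (Or.inr rfl)
        (Relation.ReflTransGen.mono (fun p q h => Or.inl h) _ _ hres)
  · ext ⟨u, v⟩
    constructor
    · intro huv
      by_cases hsc : StronglyConn H u v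
      · right
        refine Set.mem_biUnion (show IsSCC H {b | StronglyConn H u b} from ⟨u, rfl⟩) ?_
        exact ⟨huv, Set.mem_prod.mpr ⟨Or.inl rfl, hsc⟩⟩
      · exact Or.inl ⟨hCH huv, hsc⟩
    · rintro (h | h)
      · exact hbr h
      · simp only [Set.mem_iUnion] at h
        obtain ⟨S, _, hC', _⟩ := h
        exact hC'
end

section
/- Let A be a finite set, let H ⊆ A × A be the edge set of a directed graph on A, and let C ⊆ H be a maximal child of H. Then every bridge edge of H belongs to C. -/
/-- A path in `C ∪ {e}` either stays in `C` or passes through `e`. -/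
lemma transGen_union_single {A : Type*} (C : Set (A × A)) (e : A × A) {a b : A}
    (h : Relation.TransGen (EdgeRel (C ∪ {e})) a b) :
    Relation.TransGen (EdgeRel C) a b ∨
      (Relation.ReflTransGen (EdgeRel (C ∪ {e})) a e.1 ∧
       Relation.ReflTransGen (EdgeRel (C ∪ {e})) e.2 b) := by
  induction h with
  | single hab =>
    rcases hab with h | h
    · exact Or.inl (Relation.TransGen.single h)
    · rcases Set.mem_singleton_iff.mp h with h
      refine Or.inr ⟨?_, ?_⟩
      · have : a = e.1 := congrArg Prod.fst h
        exact this ▸ Relation.ReflTransGen.refl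
      · have : _ = e.2 := congrArg Prod.snd h
        exact this ▸ Relation.ReflTransGen.refl
  | tail hbc hcd ih =>
    rcases hcd with h | h
    · rcases ih with ih | ⟨h1, h2⟩
      · exact Or.inl (ih.tail h)
      · exact Or.inr ⟨h1, h2.tail (Or.inl h)⟩
    · rcases Set.mem_singleton_iff.mp h with h
      refine Or.inr ⟨?_, ?_⟩
      · have hc1 : _ = e.1 := congrArg Prod.fst h
        exact hc1 ▸ hbc.to_reflTransGen
      · have : _ = e.2 := congrArg Prod.snd h
        exact this ▸ Relation.ReflTransGen.refl

theorem maximalChild_contains_bridges {A : Type*} [Fintype A]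
    (H C : Set (A × A)) (hC : MaximalChild H C) :
    BridgeEdges H ⊆ C := by
  obtain ⟨hCH, hacy, hmax⟩ := hC
  rintro ⟨u, v⟩ ⟨heH, hnsc⟩
  by_contra heC
  have hcyc := hmax (u, v) ⟨heH, heC⟩
  simp only [AcyclicEdges, not_forall, not_not] at hcyc
  obtain ⟨a, ha⟩ := hcyc
  rcases transGen_union_single C (u, v) ha with h | ⟨h1, h2⟩
  · exact hacy a h
  · -- path from v to u in C ∪ {(u,v)} ⊆ H
    have hsub : C ∪ {(u, v)} ⊆ H := Set.union_subset hCH (by simpa using heH)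
    have hvu : Relation.ReflTransGen (EdgeRel H) v u :=
      Relation.ReflTransGen.mono (fun x y hxy => hsub hxy) v u (h2.trans h1)
    apply hnsc
    rcases hvu.cases_head with heq | ⟨c, hc, hcu⟩
    · exact Or.inl heq.symm
    · refine Or.inr ⟨Relation.TransGen.single heH, ?_⟩
      exact Relation.TransGen.head' hc hcu
end

section
/- Let A be a finite set, let H ⊆ A × A be the edge set of a directed graph on A, and let C ⊆ H be a maximal child of H. Then for every strongly connected component S of H, the set C ∩ (S × S) is a maximal child of the edge set H ∩ (S × S). -/
open Relation in
lemma stronglyConn_trans' {A : Type*} {E : Set (A × A)} {a b c : A}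
    (h1 : StronglyConn E a b) (h2 : StronglyConn E b c) : StronglyConn E a c := by
  rcases h1 with rfl | ⟨h1f, h1b⟩
  · exact h2
  · rcases h2 with rfl | ⟨h2f, h2b⟩
    · exact Or.inr ⟨h1f, h1b⟩
    · exact Or.inr ⟨h1f.trans h2f, h2b.trans h1b⟩

open Relation in
lemma transGen_union_decomp' {A : Type*} {C : Set (A × A)} {e : A × A} {x y : A}
    (h : TransGen (EdgeRel (C ∪ {e})) x y) :
    TransGen (EdgeRel C) x y ∨
      (ReflTransGen (EdgeRel C) x e.1 ∧ ReflTransGen (EdgeRel C) e.2 y) := by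
  induction h with
  | single h =>
    rcases h with h | h
    · exact Or.inl (TransGen.single h)
    · have h' : (_, _) = e := h
      exact Or.inr ⟨by rw [← h'], by rw [← h']⟩
  | tail _ hstep ih =>
    rcases hstep with h | h
    · rcases ih with ih | ⟨p1, p2⟩
      · exact Or.inl (ih.tail h)
      · exact Or.inr ⟨p1, p2.tail h⟩
    · have h' : (_, _) = e := h
      rcases ih with ih | ⟨p1, _⟩
      · exact Or.inr ⟨by rw [← h']; exact ih.to_reflTransGen, by rw [← h']⟩
      · exact Or.inr ⟨p1, by rw [← h']⟩

theorem maximalChild_restrict_scc {A : Type*} [Fintype A]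
    (H C : Set (A × A)) (hC : MaximalChild H C) :
    ∀ S : Set A, IsSCC H S → MaximalChild (H ∩ S ×ˢ S) (C ∩ S ×ˢ S) := by
  intro S hS
  obtain ⟨hCH, hCacy, hmax⟩ := hC
  obtain ⟨a0, rfl⟩ := hS
  set S : Set A := {b : A | StronglyConn H a0 b} with hSdef
  refine ⟨fun x hx => ⟨hCH hx.1, hx.2⟩, ?_, ?_⟩
  · intro a ha
    exact hCacy a (Relation.TransGen.mono (fun u v h => h.1) _ _ ha)
  · rintro e ⟨⟨heH, heS⟩, heC⟩
    have heC' : e ∉ C := fun h => heC ⟨h, heS⟩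
    intro hacy
    have hcyc := hmax e ⟨heH, heC'⟩
    simp only [AcyclicEdges, not_forall, not_not] at hcyc
    obtain ⟨a, ha⟩ := hcyc
    have he1S : e.1 ∈ S := heS.1
    have he2S : e.2 ∈ S := heS.2
    have heH' : EdgeRel H e.1 e.2 := by
      show (e.1, e.2) ∈ H; simpa using heH
    rcases transGen_union_decomp' ha with hc | ⟨p1, p2⟩
    · exact hCacy a hc
    have hpath : Relation.ReflTransGen (EdgeRel C) e.2 e.1 := p2.trans p1
    have key : ∀ v, Relation.ReflTransGen (EdgeRel C) v e.1 →
        Relation.ReflTransGen (EdgeRel H) e.2 v →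
        Relation.ReflTransGen (EdgeRel (C ∩ S ×ˢ S)) v e.1 := by
      intro v hv
      induction hv using Relation.ReflTransGen.head_induction_on with
      | refl => intro _; exact Relation.ReflTransGen.refl
      | head h h' ih =>
        rename_i a c
        intro hreach
        have haS : a ∈ S := by
          refine stronglyConn_trans' he1S (Or.inr ⟨?_, ?_⟩)
          · exact Relation.TransGen.head' heH' hreach
          · exact Relation.TransGen.head' (hCH h) (Relation.ReflTransGen.mono (fun u v hx => hCH hx) _ _ h')
        have hreachc : Relation.ReflTransGen (EdgeRel H) e.2 c := hreach.tail (hCH h)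
        have hcS : c ∈ S := by
          rcases h'.cases_head with rfl | ⟨d, hd, hrest⟩
          · exact he1S
          · refine stronglyConn_trans' he1S (Or.inr ⟨?_, ?_⟩)
            · exact Relation.TransGen.head' heH' hreachc
            · exact Relation.TransGen.head' (hCH hd) (Relation.ReflTransGen.mono (fun u v hx => hCH hx) _ _ hrest)
        have hedge : EdgeRel (C ∩ S ×ˢ S) a c := ⟨h, haS, hcS⟩
        exact Relation.ReflTransGen.head hedge (ih hreachc)
    have hp := key e.2 hpath Relation.ReflTransGen.refl
    apply hacy e.1
    refine Relation.TransGen.head' (Or.inr ?_) (Relation.ReflTransGen.mono (fun u v h => Or.inl h) _ _ hp)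
    simp
end
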